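/- arXiv:2511.04466 — 2 statements merged into one kernel-verified Lean document; each statement's English description precedes it below -/
import Mathlib

section
/- (Appendix Lemma A.3, inductive step) Under the k-means setup, let φ ↦ B(φ) be any map from ℝ to stacked vectors in ℝ^{Np}, with blocks β_i(φ), and let B̂ be a fixed stacked vector with assignments ĝ_i^{(s)} := g_i^{(s)}(B̂) and weights w_i^{(s)}(k) := (Σ_{i' : ĝ_{i'}^{(s)} = k} Q_{i'})^{-1} Q_i · 1{ĝ_i^{(s)} = k}. Assume that for every φ ∈ ℝ, every i, and every iteration s under consideration, the minimizing index in the assignment step for B(φ) (and for B̂) is unique. For S̃ ≥ 1 define S_{S̃} := {φ ∈ ℝ : g_i^{(s)}(B(φ)) = ĝ_i^{(s)} for all 0 ≤ s ≤ S̃ and all i}, and define S'_{S̃} := [∩_{i,k} {φ : ‖β_i(φ) − m^{(0)}_{ĝ_i^{(0)}}(B(φ))‖²_{x̃_i} ≤ ‖β_i(φ) − m_k^{(0)}(B(φ))‖²_{x̃_i}}] ∩ [∩_{s=1}^{S̃} ∩_{i,k} {φ : ‖β_i(φ) − Σ_{i'=1}^N w_{i'}^{(s-1)}(ĝ_i^{(s)})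 β_{i'}(φ)‖²_{x̃_i} ≤ ‖β_i(φ) − Σ_{i'=1}^N w_{i'}^{(s-1)}(k) β_{i'}(φ)‖²_{x̃_i}}]. Then S_{S̃} = S'_{S̃} implies S_{S̃+1} = S'_{S̃+1}. -/
open Matrix
open scoped BigOperators

noncomputable section

/-- The `i`-th `p`-block of a stacked vector in `ℝ^{Np}`. -/
def blk {N p : ℕ} (B : Fin N × Fin p → ℝ) (i : Fin N) : Fin p → ℝ := fun a => B (i, a)

/-- The squared weighted norm `‖u‖²_Q = uᵀQu`. -/
def qnorm {p : ℕ} (Q : Matrix (Fin p) (Fin p) ℝ) (u : Fin p → ℝ) : ℝ := u ⬝ᵥ (Q *ᵥ u)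

/-- `S_n`: the set of `φ` whose k-means assignments agree with those of `B̂` through
iteration `n`. -/
def SsetKM {N p K : ℕ} (g : ℕ → (Fin N × Fin p → ℝ) → Fin N → Fin K)
    (Bφ : ℝ → Fin N × Fin p → ℝ) (Bhat : Fin N × Fin p → ℝ) (n : ℕ) : Set ℝ :=
  {φ : ℝ | ∀ s ≤ n, ∀ i : Fin N, g s (Bφ φ) i = g s Bhat i}

/-- `S'_n`: the set of `φ` satisfying the centroid inequalities through iteration `n`. -/
def SprimeKM {N p K : ℕ} (Q : Fin N → Matrix (Fin p) (Fin p) ℝ)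
    (m : ℕ → (Fin N × Fin p → ℝ) → Fin K → Fin p → ℝ)
    (g : ℕ → (Fin N × Fin p → ℝ) → Fin N → Fin K)
    (W : ℕ → Fin K → Fin N → Matrix (Fin p) (Fin p) ℝ)
    (Bφ : ℝ → Fin N × Fin p → ℝ) (Bhat : Fin N × Fin p → ℝ) (n : ℕ) : Set ℝ :=
  {φ : ℝ |
    (∀ (i : Fin N) (k : Fin K),
      qnorm (Q i) (blk (Bφ φ) i - m 0 (Bφ φ) (g 0 Bhat i))
        ≤ qnorm (Q i) (blk (Bφ φ) i - m 0 (Bφ φ) k))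
    ∧ ∀ s : ℕ, 1 ≤ s → s ≤ n → ∀ (i : Fin N) (k : Fin K),
        qnorm (Q i) (blk (Bφ φ) i - ∑ i' : Fin N, W (s - 1) (g s Bhat i) i' *ᵥ blk (Bφ φ) i')
          ≤ qnorm (Q i) (blk (Bφ φ) i - ∑ i' : Fin N, W (s - 1) k i' *ᵥ blk (Bφ φ) i')}

/-- **Appendix Lemma A.3, inductive step.** If the characterization
`S_{S̃} = S'_{S̃}` holds, it also holds at the next iteration: `S_{S̃+1} = S'_{S̃+1}`. -/
theorem kmeans_set_characterization_inductive_step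
    (N T p K : ℕ) (hN : 0 < N) (hT : 0 < T) (hp : 0 < p) (hK : 0 < K)
    (x : Fin N → Matrix (Fin T) (Fin p) ℝ)
    (Q : Fin N → Matrix (Fin p) (Fin p) ℝ)
    (hQdef : ∀ i, Q i = (x i)ᵀ * x i) (hQpd : ∀ i, (Q i).PosDef)
    (cseed : Fin K → Fin N)
    (m : ℕ → (Fin N × Fin p → ℝ) → Fin K → Fin p → ℝ)
    (g : ℕ → (Fin N × Fin p → ℝ) → Fin N → Fin K)
    (Bφ : ℝ → Fin N × Fin p → ℝ)
    (Bhat : Fin N × Fin p → ℝ)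
    (St : ℕ) (hSt : 1 ≤ St)
    -- initial centroids are the blocks at the seed indices
    (hm0 : ∀ B : Fin N × Fin p → ℝ, (B = Bhat ∨ ∃ φ : ℝ, B = Bφ φ) →
      ∀ k : Fin K, m 0 B k = blk B (cseed k))
    -- centroid update rule
    (hmsucc : ∀ B : Fin N × Fin p → ℝ, (B = Bhat ∨ ∃ φ : ℝ, B = Bφ φ) →
      ∀ (s : ℕ) (k : Fin K),
        m (s + 1) B k
          = (∑ i ∈ Finset.univ.filter (fun i => g s B i = k), Q i)⁻¹ *ᵥ
              (∑ i ∈ Finset.univ.filter (fun i => g s B i = k), Q i *ᵥ blk B i))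
    -- `g s B i` minimizes the weighted distance to the step-`s` centroids
    (hgmin : ∀ B : Fin N × Fin p → ℝ, (B = Bhat ∨ ∃ φ : ℝ, B = Bφ φ) →
      ∀ s ≤ St + 1, ∀ (i : Fin N) (k : Fin K),
        qnorm (Q i) (blk B i - m s B (g s B i)) ≤ qnorm (Q i) (blk B i - m s B k))
    -- the minimizing index is unique at every iteration under consideration
    (huniq : ∀ B : Fin N × Fin p → ℝ, (B = Bhat ∨ ∃ φ : ℝ, B = Bφ φ) →
      ∀ s ≤ St + 1, ∀ i : Fin N, ∃! k : Fin K, ∀ k₂ : Fin K,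
        qnorm (Q i) (blk B i - m s B k) ≤ qnorm (Q i) (blk B i - m s B k₂))
    -- the cluster Gram-sum matrices are invertible
    (hinv : ∀ B : Fin N × Fin p → ℝ, (B = Bhat ∨ ∃ φ : ℝ, B = Bφ φ) →
      ∀ s ≤ St, ∀ k : Fin K,
        IsUnit (∑ i ∈ Finset.univ.filter (fun i => g s B i = k), Q i).det)
    -- the weight matrices computed from the clusters of `B̂`
    (W : ℕ → Fin K → Fin N → Matrix (Fin p) (Fin p) ℝ)
    (hW : ∀ (s : ℕ) (k : Fin K) (i : Fin N),
      W s k i = if g s Bhat i = k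
        then (∑ j ∈ Finset.univ.filter (fun j => g s Bhat j = k), Q j)⁻¹ * Q i else 0)
    -- inductive hypothesis
    (hind : SsetKM g Bφ Bhat St = SprimeKM Q m g W Bφ Bhat St) :
    SsetKM g Bφ Bhat (St + 1) = SprimeKM Q m g W Bφ Bhat (St + 1) := by
  have key : ∀ φ : ℝ, (∀ i, g St (Bφ φ) i = g St Bhat i) → ∀ k : Fin K,
      (∑ i' : Fin N, W St k i' *ᵥ blk (Bφ φ) i') = m (St + 1) (Bφ φ) k := by
    intro φ hφ k
    rw [hmsucc (Bφ φ) (Or.inr ⟨φ, rfl⟩) St k]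
    have hfilter : Finset.univ.filter (fun i => g St (Bφ φ) i = k)
        = Finset.univ.filter (fun i => g St Bhat i = k) := by
      apply Finset.filter_congr; intro i _; simp [hφ i]
    rw [hfilter]
    have h1 : ∀ i' : Fin N, W St k i' *ᵥ blk (Bφ φ) i'
        = if g St Bhat i' = k then
            ((Finset.univ.filter (fun j => g St Bhat j = k)).sum Q)⁻¹ *ᵥ (Q i' *ᵥ blk (Bφ φ) i')
          else 0 := by
      intro i'
      rw [hW]
      split <;> simp [Matrix.mulVec_mulVec]
    calc (∑ i' : Fin N, W St k i' *ᵥ blk (Bφ φ) i')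
        = ∑ i' ∈ Finset.univ.filter (fun j => g St Bhat j = k),
            ((Finset.univ.filter (fun j => g St Bhat j = k)).sum Q)⁻¹ *ᵥ (Q i' *ᵥ blk (Bφ φ) i') := by
          simp only [h1]
          exact (Finset.sum_filter _ _).symm
      _ = _ := by
          rw [← Matrix.mulVecLin_apply, map_sum]
          simp [Matrix.mulVecLin_apply]
  ext φ
  simp only [SsetKM, SprimeKM, Set.mem_setOf_eq]
  constructor
  · intro h
    have hS : φ ∈ SsetKM g Bφ Bhat St := fun s hs i => h s (le_trans hs (Nat.le_succ _)) i
    have hagree : ∀ i, g St (Bφ φ) i = g St Bhat i := fun i => h St (Nat.le_succ St) i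
    rw [hind] at hS
    obtain ⟨h0, h1⟩ := hS
    refine ⟨h0, ?_⟩
    intro s hs1 hsS i k
    rcases Nat.lt_or_ge s (St + 1) with hlt | hge
    · exact h1 s hs1 (Nat.lt_succ_iff.mp hlt) i k
    · have hseq : s = St + 1 := le_antisymm hsS hge
      subst hseq
      have : St + 1 - 1 = St := rfl
      rw [this, key φ hagree, key φ hagree]
      rw [← h (St + 1) le_rfl i]
      exact hgmin (Bφ φ) (Or.inr ⟨φ, rfl⟩) (St + 1) le_rfl i k
  · intro h
    obtain ⟨h0, h1⟩ := h
    have hS' : φ ∈ SprimeKM Q m g W Bφ Bhat St :=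
      ⟨h0, fun s hs1 hs i k => h1 s hs1 (le_trans hs (Nat.le_succ _)) i k⟩
    rw [← hind] at hS'
    have hagree : ∀ i, g St (Bφ φ) i = g St Bhat i := fun i => hS' St le_rfl i
    intro s hs i
    rcases Nat.lt_or_ge s (St + 1) with hlt | hge
    · exact hS' s (Nat.lt_succ_iff.mp hlt) i
    · have hseq : s = St + 1 := le_antisymm hs hge
      subst hseq
      obtain ⟨k0, _, hk0uniq⟩ := huniq (Bφ φ) (Or.inr ⟨φ, rfl⟩) (St + 1) le_rfl i
      have hA : ∀ k₂ : Fin K,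
          qnorm (Q i) (blk (Bφ φ) i - m (St + 1) (Bφ φ) (g (St + 1) (Bφ φ) i))
            ≤ qnorm (Q i) (blk (Bφ φ) i - m (St + 1) (Bφ φ) k₂) :=
        fun k₂ => hgmin (Bφ φ) (Or.inr ⟨φ, rfl⟩) (St + 1) le_rfl i k₂
      have hB : ∀ k₂ : Fin K,
          qnorm (Q i) (blk (Bφ φ) i - m (St + 1) (Bφ φ) (g (St + 1) Bhat i))
            ≤ qnorm (Q i) (blk (Bφ φ) i - m (St + 1) (Bφ φ) k₂) := by
        intro k₂
        have := h1 (St + 1) (by omega) le_rfl i k₂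
        rwa [show St + 1 - 1 = St from rfl, key φ hagree, key φ hagree] at this
      rw [hk0uniq _ hA, hk0uniq _ hB]

end
end

section
/- (Theorem 3.2) Under the k-means setup, let φ ↦ B(φ) be any map from ℝ to stacked vectors in ℝ^{Np}, with blocks β_i(φ), let B̂ be a fixed stacked vector with assignments ĝ_i^{(s)} := g_i^{(s)}(B̂) and weights w_i^{(s)}(k) := (Σ_{i' : ĝ_{i'}^{(s)} = k} Q_{i'})^{-1} Q_i · 1{ĝ_i^{(s)} = k}, and let S ≥ 1 be a fixed number of iterations. Assume that for every φ ∈ ℝ, every i, and every 0 ≤ s ≤ S, the minimizing index in the assignment step for B(φ) (and for B̂) is unique. Then the set {φ ≥ 0 : g_i^{(s)}(B(φ)) = ĝ_i^{(s)} for all 0 ≤ s ≤ S and all i ∈ {1,…,N}} equals the intersection of: (1) {φ ≥ 0}, (2) ∩_{i=1}^N ∩_{k=1}^K {φ : ‖β_i(φ) − m^{(0)}_{ĝ_i^{(0)}}(B(φ))‖²_{x̃_i} ≤ ‖β_i(φ) − m_k^{(0)}(B(φ))‖²_{x̃_i}}, and (3) ∩_{s=1}^S ∩_{i=1}^N ∩_{k=1}^K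 {φ : ‖β_i(φ) − Σ_{i'=1}^N w_{i'}^{(s-1)}(ĝ_i^{(s)}) β_{i'}(φ)‖²_{x̃_i} ≤ ‖β_i(φ) − Σ_{i'=1}^N w_{i'}^{(s-1)}(k) β_{i'}(φ)‖²_{x̃_i}}. -/
open Matrix
open scoped BigOperators

noncomputable section

private lemma Wsum_eq' {N p K : ℕ} (Q : Fin N → Matrix (Fin p) (Fin p) ℝ)
    (gh : Fin N → Fin K)
    (W : Fin N → Matrix (Fin p) (Fin p) ℝ)
    (k : Fin K)
    (hW : ∀ i, W i = if gh i = k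
        then (∑ j ∈ Finset.univ.filter (fun j => gh j = k), Q j)⁻¹ * Q i else 0)
    (v : Fin N → Fin p → ℝ) :
    ∑ i' : Fin N, W i' *ᵥ v i'
      = (∑ j ∈ Finset.univ.filter (fun j => gh j = k), Q j)⁻¹ *ᵥ
          (∑ j ∈ Finset.univ.filter (fun j => gh j = k), Q j *ᵥ v j) := by
  set M := (∑ j ∈ Finset.univ.filter (fun j => gh j = k), Q j)⁻¹ with hM
  have h1 : ∀ i', W i' *ᵥ v i' = if gh i' = k then M *ᵥ (Q i' *ᵥ v i') else 0 := by
    intro i'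
    rw [hW]
    split <;> simp [Matrix.zero_mulVec, Matrix.mulVec_mulVec]
  simp only [h1]
  rw [Finset.sum_ite, Finset.sum_const_zero, add_zero]
  exact (map_sum (Matrix.mulVecLin M) (fun j => Q j *ᵥ v j) _).symm

/-- **Theorem 3.2.** The truncation set `S = {φ ≥ 0 : all k-means
assignments of B(φ) through iteration S agree with those of B̂}` is exactly the
intersection of `{φ ≥ 0}` with the initial-centroid inequalities and the
iterated weighted-centroid inequalities. -/
theorem kmeans_truncation_set_characterization
    (N T p K : ℕ) (hN : 0 < N) (hT : 0 < T) (hp : 0 < p) (hK : 0 < K)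
    (x : Fin N → Matrix (Fin T) (Fin p) ℝ)
    (Q : Fin N → Matrix (Fin p) (Fin p) ℝ)
    (hQdef : ∀ i, Q i = (x i)ᵀ * x i) (hQpd : ∀ i, (Q i).PosDef)
    (cseed : Fin K → Fin N)
    (m : ℕ → (Fin N × Fin p → ℝ) → Fin K → Fin p → ℝ)
    (g : ℕ → (Fin N × Fin p → ℝ) → Fin N → Fin K)
    (Bφ : ℝ → Fin N × Fin p → ℝ)
    (Bhat : Fin N × Fin p → ℝ)
    (S : ℕ) (hS : 1 ≤ S)
    -- initial centroids are the blocks at the seed indices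
    (hm0 : ∀ B : Fin N × Fin p → ℝ, (B = Bhat ∨ ∃ φ : ℝ, B = Bφ φ) →
      ∀ k : Fin K, m 0 B k = blk B (cseed k))
    -- centroid update rule
    (hmsucc : ∀ B : Fin N × Fin p → ℝ, (B = Bhat ∨ ∃ φ : ℝ, B = Bφ φ) →
      ∀ (s : ℕ) (k : Fin K),
        m (s + 1) B k
          = (∑ i ∈ Finset.univ.filter (fun i => g s B i = k), Q i)⁻¹ *ᵥ
              (∑ i ∈ Finset.univ.filter (fun i => g s B i = k), Q i *ᵥ blk B i))
    -- `g s B i` minimizes the weighted distance to the step-`s` centroids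
    (hgmin : ∀ B : Fin N × Fin p → ℝ, (B = Bhat ∨ ∃ φ : ℝ, B = Bφ φ) →
      ∀ s ≤ S, ∀ (i : Fin N) (k : Fin K),
        qnorm (Q i) (blk B i - m s B (g s B i)) ≤ qnorm (Q i) (blk B i - m s B k))
    -- the minimizing index is unique at every iteration `0 ≤ s ≤ S`
    (huniq : ∀ B : Fin N × Fin p → ℝ, (B = Bhat ∨ ∃ φ : ℝ, B = Bφ φ) →
      ∀ s ≤ S, ∀ i : Fin N, ∃! k : Fin K, ∀ k₂ : Fin K,
        qnorm (Q i) (blk B i - m s B k) ≤ qnorm (Q i) (blk B i - m s B k₂))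
    -- the cluster Gram-sum matrices are invertible
    (hinv : ∀ B : Fin N × Fin p → ℝ, (B = Bhat ∨ ∃ φ : ℝ, B = Bφ φ) →
      ∀ s < S, ∀ k : Fin K,
        IsUnit (∑ i ∈ Finset.univ.filter (fun i => g s B i = k), Q i).det)
    -- the weight matrices computed from the clusters of `B̂`
    (W : ℕ → Fin K → Fin N → Matrix (Fin p) (Fin p) ℝ)
    (hW : ∀ (s : ℕ) (k : Fin K) (i : Fin N),
      W s k i = if g s Bhat i = k
        then (∑ j ∈ Finset.univ.filter (fun j => g s Bhat j = k), Q j)⁻¹ * Q i else 0) :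
    {φ : ℝ | 0 ≤ φ} ∩ SsetKM g Bφ Bhat S
      = {φ : ℝ | 0 ≤ φ} ∩ SprimeKM Q m g W Bφ Bhat S := by
  have hBphi : ∀ φ : ℝ, (Bφ φ = Bhat ∨ ∃ ψ : ℝ, Bφ φ = Bφ ψ) := fun φ => Or.inr ⟨φ, rfl⟩
  ext φ
  simp only [Set.mem_inter_iff, Set.mem_setOf_eq, SsetKM, SprimeKM]
  constructor
  · rintro ⟨hφ, hmem⟩
    refine ⟨hφ, ?_, ?_⟩
    · intro i k
      have h := hgmin (Bφ φ) (hBphi φ) 0 (Nat.zero_le S) i k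
      rwa [hmem 0 (Nat.zero_le S) i] at h
    · intro s hs1 hsS i k
      have hmeq : ∀ k' : Fin K,
          m s (Bφ φ) k' = ∑ i' : Fin N, W (s - 1) k' i' *ᵥ blk (Bφ φ) i' := by
        intro k'
        obtain ⟨t, rfl⟩ : ∃ t, s = t + 1 := ⟨s - 1, by omega⟩
        have hfil : (Finset.univ.filter (fun i => g t (Bφ φ) i = k'))
            = (Finset.univ.filter (fun i => g t Bhat i = k')) := by
          apply Finset.filter_congr
          intro j _
          rw [hmem t (by omega) j]
        rw [hmsucc (Bφ φ) (hBphi φ) t k', hfil]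
        rw [Wsum_eq' Q (g t Bhat) (W (t + 1 - 1) k') k'
          (fun i' => by simpa using hW (t + 1 - 1) k' i') (blk (Bφ φ))]
      rw [← hmeq (g s Bhat i), ← hmeq k]
      have h := hgmin (Bφ φ) (hBphi φ) s hsS i k
      rwa [hmem s hsS i] at h
  · rintro ⟨hφ, h0, h1⟩
    refine ⟨hφ, ?_⟩
    intro s
    induction s with
    | zero =>
      intro _ i
      obtain ⟨k, hk, huni⟩ := huniq (Bφ φ) (hBphi φ) 0 (Nat.zero_le S) i
      have hA : g 0 (Bφ φ) i = k :=
        huni _ (fun k₂ => hgmin (Bφ φ) (hBphi φ) 0 (Nat.zero_le S) i k₂)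
      have hB : g 0 Bhat i = k := huni _ (fun k₂ => h0 i k₂)
      rw [hA, hB]
    | succ t ih =>
      intro hsS i
      have htS : t ≤ S := by omega
      have hmeq : ∀ k' : Fin K,
          m (t + 1) (Bφ φ) k' = ∑ i' : Fin N, W t k' i' *ᵥ blk (Bφ φ) i' := by
        intro k'
        have hfil : (Finset.univ.filter (fun i => g t (Bφ φ) i = k'))
            = (Finset.univ.filter (fun i => g t Bhat i = k')) := by
          apply Finset.filter_congr
          intro j _
          rw [ih htS j]
        rw [hmsucc (Bφ φ) (hBphi φ) t k', hfil]
        exact (Wsum_eq' Q (g t Bhat) (W t k') k'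
          (fun i' => hW t k' i') (blk (Bφ φ))).symm ▸ rfl
      obtain ⟨k, hk, huni⟩ := huniq (Bφ φ) (hBphi φ) (t + 1) hsS i
      have hA : g (t + 1) (Bφ φ) i = k :=
        huni _ (fun k₂ => hgmin (Bφ φ) (hBphi φ) (t + 1) hsS i k₂)
      have hB : g (t + 1) Bhat i = k := by
        refine huni _ (fun k₂ => ?_)
        have := h1 (t + 1) (by omega) hsS i k₂
        simp only [Nat.add_sub_cancel] at this
        rwa [← hmeq (g (t + 1) Bhat i), ← hmeq k₂] at this
      rw [hA, hB]


end
end
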